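/- arXiv:1904.00652 — 4 statements merged into one kernel-verified Lean document; each statement's English description precedes it below -/
import Mathlib

section
/- A measure-preserving system (X, B, m, T) is exact if and only if lim_{n→∞} m(T^n A) = 1 for every A ∈ B with m(A) > 0 and T^n A ∈ B for every n ≥ 1. -/
open MeasureTheory Filter Topology

/-- A measure-preserving system `(X, 𝓑, m, T)` (with `T` mapping
measurable sets to measurable sets) is exact if and only if `m (T^n A) → 1`
for every measurable `A` with `m A > 0`. -/
theorem stmt_3 {X : Type*} [MeasurableSpace X] (m : Measure X) [IsProbabilityMeasure m]
    (T : X → X) (hT : MeasurePreserving T m m)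
    (hTimg : ∀ A : Set X, MeasurableSet A → MeasurableSet (T '' A)) :
    (∀ B : Set X,
        (∀ n : ℕ, ∃ A : Set X, MeasurableSet A ∧ B = T^[n] ⁻¹' A) → m B = 0 ∨ m B = 1) ↔
      (∀ A : Set X, MeasurableSet A → 0 < m A →
        Tendsto (fun n : ℕ => m (T^[n] '' A)) atTop (𝓝 1)) := by
  have himg : ∀ (n : ℕ) (A : Set X), MeasurableSet A → MeasurableSet (T^[n] '' A) := by
    intro n
    induction n with
    | zero => intro A hA; simpa using hA
    | succ k ih =>
        intro A hA
        rw [Function.iterate_succ', Set.image_comp]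
        exact hTimg _ (ih A hA)
  constructor
  · -- exact ⇒ tendsto
    intro hE A hA hApos
    set S : ℕ → Set X := fun n => T^[n] ⁻¹' (T^[n] '' A) with hS
    have hmono : Monotone S := by
      apply monotone_nat_of_le_succ
      intro n x hx
      have hx' : T^[n] x ∈ T^[n] '' A := hx
      show T^[n + 1] x ∈ T^[n + 1] '' A
      rw [Function.iterate_succ', Set.image_comp]
      exact Set.mem_image_of_mem T hx'
    have hmeas : ∀ n, m (S n) = m (T^[n] '' A) := fun n =>
      (hT.iterate n).measure_preimage (himg n A hA).nullMeasurableSet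
    have htail : ∀ n : ℕ, ∃ A' : Set X, MeasurableSet A' ∧ (⋃ k, S k) = T^[n] ⁻¹' A' := by
      intro n
      refine ⟨⋃ k, T^[k] ⁻¹' (T^[k + n] '' A), ?_, ?_⟩
      · exact MeasurableSet.iUnion fun k =>
          ((hT.iterate k).measurable) (himg (k + n) A hA)
      · rw [Set.preimage_iUnion]
        have : ∀ k, T^[n] ⁻¹' (T^[k] ⁻¹' (T^[k + n] '' A)) = S (k + n) := by
          intro k
          rw [← Set.preimage_comp, ← Function.iterate_add]
        rw [funext this]
        apply le_antisymm
        · refine Set.iUnion_subset fun k => ?_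
          exact (hmono (Nat.le_add_right k n)).trans (Set.subset_iUnion (fun k => S (k + n)) k)
        · exact Set.iUnion_subset fun k => Set.subset_iUnion S (k + n)
    have hBpos : 0 < m (⋃ k, S k) := by
      refine lt_of_lt_of_le hApos ?_
      refine le_trans ?_ (measure_mono (Set.subset_iUnion S 0))
      simp [hS]
    have hB1 : m (⋃ k, S k) = 1 := by
      rcases hE _ htail with h | h
      · exact absurd h (ne_of_gt hBpos)
      · exact h
    have := tendsto_measure_iUnion_atTop (μ := m) hmono
    rw [hB1] at this
    refine this.congr fun n => (hmeas n)
  · -- tendsto ⇒ exact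
    intro hR B hB
    obtain ⟨A₀, hA₀, hBA₀⟩ := hB 0
    have hBmeas : MeasurableSet B := by simpa using hBA₀ ▸ hA₀
    rcases eq_or_lt_of_le (zero_le : 0 ≤ m B) with h | hpos
    · exact Or.inl h.symm
    · right
      have htends := hR B hBmeas hpos
      have hle : ∀ n : ℕ, m (T^[n] '' B) ≤ m B := by
        intro n
        obtain ⟨A, hA, hBA⟩ := hB n
        calc m (T^[n] '' B) ≤ m A := by
              refine measure_mono ?_
              rw [hBA]
              exact Set.image_preimage_subset _ _
          _ = m B := by
              rw [hBA]
              exact ((hT.iterate n).measure_preimage hA.nullMeasurableSet).symm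
      have h1 : (1 : ENNReal) ≤ m B := le_of_tendsto htends (Eventually.of_forall hle)
      exact le_antisymm prob_le_one h1
end

section
/- Every Lebesgue-measurable scrambled set for the Gauss system has Lebesgue measure zero. -/
open MeasureTheory Filter Set Topology
open scoped ENNReal NNReal

/-- The Gauss map `T x = 1/x - ⌊1/x⌋` (with `T 0 = 0`). -/
noncomputable def gaussMap (x : ℝ) : ℝ := Int.fract x⁻¹

namespace GaussAux

/-- Good points: irrational points of `(0,1)`. -/
def G (x : ℝ) : Prop := Irrational x ∧ x ∈ Set.Ioo (0 : ℝ) 1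

/-- Inverse branch of the Gauss map with digit `k`. -/
noncomputable def psi (k : ℕ) (t : ℝ) : ℝ := ((k : ℝ) + t)⁻¹

/-- Inverse branch for a word of digits. -/
noncomputable def psiW : List ℕ → ℝ → ℝ
  | [], t => t
  | k :: w, t => psi k (psiW w t)

lemma G.inv_gt {x : ℝ} (hx : G x) : 1 < x⁻¹ :=
  (one_lt_inv₀ hx.2.1).2 hx.2.2

lemma G.inv_irr {x : ℝ} (hx : G x) : Irrational x⁻¹ := hx.1.inv

lemma G.gauss {x : ℝ} (hx : G x) : G (gaussMap x) := by
  have hirr : Irrational (gaussMap x) := by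
    rw [gaussMap, Int.fract]
    exact hx.inv_irr.sub_intCast _
  refine ⟨hirr, lt_of_le_of_ne (Int.fract_nonneg _) ?_, Int.fract_lt_one _⟩
  intro h
  exact hirr ⟨0, by rw [Rat.cast_zero]; exact h⟩

lemma G.gauss_iter {x : ℝ} (hx : G x) (n : ℕ) : G (gaussMap^[n] x) := by
  induction n with
  | zero => simpa using hx
  | succ n ih => rw [Function.iterate_succ_apply']; exact ih.gauss

lemma G.one_le_digit {x : ℝ} (hx : G x) : 1 ≤ ⌊x⁻¹⌋₊ :=
  Nat.le_floor (by push_cast; exact hx.inv_gt.le)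

lemma G.floor_cast {x : ℝ} (hx : G x) : ((⌊x⁻¹⌋₊ : ℝ)) = (⌊x⁻¹⌋ : ℝ) := by
  have h0 : (0:ℝ) ≤ x⁻¹ := by linarith [hx.inv_gt]
  have : (⌊x⁻¹⌋₊ : ℤ) = ⌊x⁻¹⌋ := Int.natCast_floor_eq_floor h0
  exact_mod_cast congrArg (fun z : ℤ => (z : ℝ)) this

/-- `x = psi (digit x) (gaussMap x)` for good `x`. -/
lemma G.eq_psi {x : ℝ} (hx : G x) : x = psi ⌊x⁻¹⌋₊ (gaussMap x) := by
  have hx0 : x ≠ 0 := ne_of_gt hx.2.1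
  rw [psi, hx.floor_cast, gaussMap, Int.fract]
  ring_nf
  simp [hx0]

lemma psi_mem {k : ℕ} (hk : 1 ≤ k) {z : ℝ} (hz : z ∈ Set.Icc (0:ℝ) 1) :
    psi k z ∈ Set.Icc (0:ℝ) 1 := by
  have h1 : (1:ℝ) ≤ (k : ℝ) + z := by
    have : (1:ℝ) ≤ (k:ℝ) := by exact_mod_cast hk
    linarith [hz.1]
  constructor
  · rw [psi]; exact inv_nonneg.2 (by linarith)
  · rw [psi]; exact inv_le_one_of_one_le₀ h1

lemma G.psi {k : ℕ} (hk : 1 ≤ k) {z : ℝ} (hz : G z) : G (psi k z) := by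
  have h1 : (1:ℝ) < (k : ℝ) + z := by
    have : (1:ℝ) ≤ (k:ℝ) := by exact_mod_cast hk
    linarith [hz.2.1]
  have hirr : Irrational ((k:ℝ) + z) := hz.1.natCast_add k
  refine ⟨hirr.inv, ?_, ?_⟩
  · rw [GaussAux.psi]; exact inv_pos.2 (by linarith)
  · rw [GaussAux.psi]; exact inv_lt_one_of_one_lt₀ h1

lemma gauss_psi {k : ℕ} (hk : 1 ≤ k) {z : ℝ} (hz : G z) :
    gaussMap (psi k z) = z := by
  rw [gaussMap, psi, inv_inv, Int.fract_natCast_add,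
    Int.fract_eq_self.2 ⟨le_of_lt hz.2.1, hz.2.2⟩]

lemma digit_psi {k : ℕ} (hk : 1 ≤ k) {z : ℝ} (hz : G z) :
    ⌊(psi k z)⁻¹⌋₊ = k := by
  have h0 : (0:ℝ) ≤ (k : ℝ) + z := by
    have : (1:ℝ) ≤ (k:ℝ) := by exact_mod_cast hk
    linarith [hz.2.1]
  rw [psi, inv_inv, Nat.floor_eq_iff h0]
  constructor
  · push_cast; linarith [hz.2.1]
  · push_cast; linarith [hz.2.2]

/-- Word predicate: all digits at least one. -/
def OKW (w : List ℕ) : Prop := ∀ k ∈ w, 1 ≤ k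

lemma psiW_mem {w : List ℕ} (hw : OKW w) {z : ℝ} (hz : z ∈ Set.Icc (0:ℝ) 1) :
    psiW w z ∈ Set.Icc (0:ℝ) 1 := by
  induction w with
  | nil => simpa [psiW]
  | cons k w ih =>
      exact psi_mem (hw k (by simp)) (ih fun a ha => hw a (by simp [ha]))

lemma G.psiW {w : List ℕ} (hw : OKW w) {z : ℝ} (hz : G z) : G (psiW w z) := by
  induction w with
  | nil => simpa [GaussAux.psiW]
  | cons k w ih =>
      exact G.psi (hw k (by simp)) (ih fun a ha => hw a (by simp [ha]))

lemma gauss_iter_psiW {w : List ℕ} (hw : OKW w) {z : ℝ} (hz : G z) :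
    gaussMap^[w.length] (psiW w z) = z := by
  induction w with
  | nil => simp [psiW]
  | cons k w ih =>
      have hw' : OKW w := fun a ha => hw a (by simp [ha])
      have hg : G (psiW w z) := G.psiW hw' hz
      rw [List.length_cons, psiW, Function.iterate_succ_apply,
        gauss_psi (hw k (by simp)) hg]
      exact ih hw'

lemma psi_injOn {k : ℕ} {a b : ℝ} (ha : (0:ℝ) < (k:ℝ) + a) (hb : (0:ℝ) < (k:ℝ) + b)
    (h : psi k a = psi k b) : a = b := by
  rw [psi, psi, inv_inj] at h
  linarith

lemma psiW_inj {z : ℝ} (hz : G z) : ∀ {w w' : List ℕ}, OKW w → OKW w' →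
    w.length = w'.length → psiW w z = psiW w' z → w = w' := by
  intro w
  induction w with
  | nil => intro w' _ _ hl _; exact (List.length_eq_zero_iff.1 hl.symm).symm ▸ rfl
  | cons k w ih =>
      intro w' hw hw' hl heq
      match w' with
      | [] => simp at hl
      | k' :: w'' =>
        have hw1 : OKW w := fun a ha => hw a (by simp [ha])
        have hw1' : OKW w'' := fun a ha => hw' a (by simp [ha])
        have hg : G (psiW w z) := G.psiW hw1 hz
        have hg' : G (psiW w'' z) := G.psiW hw1' hz
        simp only [psiW] at heq
        have hk : k = k' := by
          have h1 := digit_psi (hw k (by simp)) hg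
          have h2 := digit_psi (hw' k' (by simp)) hg'
          rw [← h1, ← h2, heq]
        subst hk
        have h0 : (0:ℝ) < (k:ℝ) + psiW w z := by
          have : (1:ℝ) ≤ (k:ℝ) := by exact_mod_cast hw k (by simp)
          linarith [hg.2.1]
        have h0' : (0:ℝ) < (k:ℝ) + psiW w'' z := by
          have : (1:ℝ) ≤ (k:ℝ) := by exact_mod_cast hw k (by simp)
          linarith [hg'.2.1]
        have : psiW w z = psiW w'' z := psi_injOn h0 h0' heq
        have hll : w.length = w''.length := by simpa using hl
        rw [ih hw1 hw1' hll this]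

/-- The digit word of `x` of length `n`. -/
noncomputable def wd : ℕ → ℝ → List ℕ
  | 0, _ => []
  | n + 1, x => ⌊x⁻¹⌋₊ :: wd n (gaussMap x)

lemma wd_length (n : ℕ) (x : ℝ) : (wd n x).length = n := by
  induction n generalizing x with
  | zero => rfl
  | succ n ih => simp [wd, ih]

lemma wd_okw {x : ℝ} (hx : G x) (n : ℕ) : OKW (wd n x) := by
  induction n generalizing x with
  | zero => intro a ha; simp [wd] at ha
  | succ n ih =>
      intro a ha
      rw [wd] at ha
      rcases List.mem_cons.1 ha with h | h
      · exact h ▸ hx.one_le_digit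
      · exact ih hx.gauss a h

lemma psiW_wd {x : ℝ} (hx : G x) (n : ℕ) :
    psiW (wd n x) (gaussMap^[n] x) = x := by
  induction n generalizing x with
  | zero => simp [wd, psiW]
  | succ n ih =>
      rw [wd, psiW, Function.iterate_succ_apply, ih hx.gauss]
      exact (hx.eq_psi).symm

/-- One-step Lipschitz bound. -/
lemma lip_one {k : ℕ} (hk : 1 ≤ k) {s t : ℝ} (hs : 0 ≤ s) (ht : 0 ≤ t) :
    |psi k s - psi k t| ≤ |s - t| := by
  have hk1 : (1:ℝ) ≤ (k:ℝ) := by exact_mod_cast hk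
  have hks : (1:ℝ) ≤ (k:ℝ) + s := by linarith
  have hkt : (1:ℝ) ≤ (k:ℝ) + t := by linarith
  have h : psi k s - psi k t = (t - s) / (((k:ℝ) + s) * ((k:ℝ) + t)) := by
    rw [psi, psi]
    field_simp
    try ring
  have hpos : (0:ℝ) < ((k:ℝ) + s) * ((k:ℝ) + t) := by nlinarith
  rw [h, abs_div, abs_sub_comm t s, abs_of_pos hpos]
  exact div_le_self (abs_nonneg _) (by nlinarith)

/-- Two-step Lipschitz bound with factor `1/4`. -/
lemma lip_two {j k : ℕ} (hj : 1 ≤ j) (hk : 1 ≤ k) {s t : ℝ}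
    (hs : 0 ≤ s) (ht : 0 ≤ t) :
    |psi j (psi k s) - psi j (psi k t)| ≤ (1/4) * |s - t| := by
  have hj1 : (1:ℝ) ≤ (j:ℝ) := by exact_mod_cast hj
  have hk1 : (1:ℝ) ≤ (k:ℝ) := by exact_mod_cast hk
  have hks : (1:ℝ) ≤ (k:ℝ) + s := by linarith
  have hkt : (1:ℝ) ≤ (k:ℝ) + t := by linarith
  have hks0 : ((k:ℝ) + s) ≠ 0 := by linarith
  have hkt0 : ((k:ℝ) + t) ≠ 0 := by linarith
  have hDs : (2:ℝ) ≤ (j:ℝ) * ((k:ℝ) + s) + 1 := by nlinarith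
  have hDt : (2:ℝ) ≤ (j:ℝ) * ((k:ℝ) + t) + 1 := by nlinarith
  have hDs0 : ((j:ℝ) * ((k:ℝ) + s) + 1) ≠ 0 := by linarith
  have hDt0 : ((j:ℝ) * ((k:ℝ) + t) + 1) ≠ 0 := by linarith
  have h : psi j (psi k s) - psi j (psi k t)
      = (s - t) / (((j:ℝ) * ((k:ℝ) + s) + 1) * ((j:ℝ) * ((k:ℝ) + t) + 1)) := by
    rw [psi, psi, psi, psi]
    have e1 : (j:ℝ) + ((k:ℝ)+s)⁻¹ = ((j:ℝ)*((k:ℝ)+s)+1)/((k:ℝ)+s) := by field_simp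
    have e2 : (j:ℝ) + ((k:ℝ)+t)⁻¹ = ((j:ℝ)*((k:ℝ)+t)+1)/((k:ℝ)+t) := by field_simp
    rw [e1, e2, inv_div, inv_div, div_sub_div _ _ hDs0 hDt0]
    congr 1
    ring
  rw [h, abs_div]
  have hd4 : (4:ℝ) ≤ |((j:ℝ) * ((k:ℝ) + s) + 1) * ((j:ℝ) * ((k:ℝ) + t) + 1)| := by
    rw [abs_of_pos (by nlinarith)]
    nlinarith
  rw [div_le_iff₀ (by positivity : (0:ℝ) < |((j:ℝ) * ((k:ℝ) + s) + 1) * ((j:ℝ) * ((k:ℝ) + t) + 1)|)]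
  calc |s - t| = (1/4) * |s - t| * 4 := by ring
    _ ≤ (1/4) * |s - t| * |((j:ℝ) * ((k:ℝ) + s) + 1) * ((j:ℝ) * ((k:ℝ) + t) + 1)| := by
        apply mul_le_mul_of_nonneg_left hd4 (by positivity)

/-- Main Lipschitz estimate for words. -/
lemma lip_word : ∀ (n : ℕ) (w : List ℕ), w.length ≤ n → OKW w →
    ∀ s ∈ Set.Icc (0:ℝ) 1, ∀ t ∈ Set.Icc (0:ℝ) 1,
    |psiW w s - psiW w t| ≤ 2 * (1/2 : ℝ) ^ w.length * |s - t| := by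
  intro n
  induction n using Nat.strong_induction_on with
  | _ n ih =>
    intro w hwn hw s hs t ht
    match w with
    | [] =>
        simp only [psiW, List.length_nil, pow_zero, mul_one]
        linarith [abs_nonneg (s - t)]
    | [k] =>
        have h := lip_one (hw k (by simp)) hs.1 ht.1
        simp only [psiW, List.length_cons, List.length_nil, zero_add, pow_one]
        calc |psi k s - psi k t| ≤ |s - t| := h
          _ = 2 * (1/2 : ℝ) * |s - t| := by ring
    | j :: k :: w =>
        have hw2 : OKW w := fun a ha => hw a (by simp [ha])
        have hlen : w.length ≤ n - 1 := by
          simp only [List.length_cons] at hwn; omega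
        have hn1 : n - 1 < n := by
          simp only [List.length_cons] at hwn; omega
        have hrec := ih (n - 1) hn1 w hlen hw2 s hs t ht
        have hms : psiW w s ∈ Set.Icc (0:ℝ) 1 := psiW_mem hw2 hs
        have hmt : psiW w t ∈ Set.Icc (0:ℝ) 1 := psiW_mem hw2 ht
        have h2 := lip_two (hw j (by simp)) (hw k (by simp)) hms.1 hmt.1
        simp only [psiW, List.length_cons]
        calc |psi j (psi k (psiW w s)) - psi j (psi k (psiW w t))|
            ≤ (1/4) * |psiW w s - psiW w t| := h2
          _ ≤ (1/4) * (2 * (1/2:ℝ) ^ w.length * |s - t|) := by linarith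
          _ = 2 * (1/2:ℝ) ^ (w.length + 1 + 1) * |s - t| := by ring

lemma psiW_measurable (w : List ℕ) : Measurable (psiW w) := by
  induction w with
  | nil => exact measurable_id
  | cons k w ih => exact (measurable_const.add ih).inv

end GaussAux

open GaussAux

/-- Every Lebesgue-measurable scrambled set for the Gauss system
(on the irrationals of `[0,1)`) has Lebesgue measure zero. -/
theorem stmt_4 (B : Set ℝ)
    (hB : B ⊆ {x : ℝ | x ∈ Set.Ico (0 : ℝ) 1 ∧ Irrational x})
    (hBm : MeasurableSet B)
    (hscr : ∀ x ∈ B, ∀ y ∈ B, x ≠ y →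
      liminf (fun n : ℕ => |gaussMap^[n] x - gaussMap^[n] y|) atTop = 0 ∧
        0 < limsup (fun n : ℕ => |gaussMap^[n] x - gaussMap^[n] y|) atTop) :
    volume B = 0 := by
  -- every element of B is good
  have hG : ∀ x ∈ B, G x := by
    intro x hx
    obtain ⟨⟨h0, h1⟩, hirr⟩ := hB hx
    refine ⟨hirr, lt_of_le_of_ne h0 ?_, h1⟩
    intro h
    exact hirr ⟨0, by rw [Rat.cast_zero, ← h]⟩
  -- two points of B with eventually equal orbits coincide
  have hinj : ∀ x ∈ B, ∀ y ∈ B, ∀ n : ℕ,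
      gaussMap^[n] x = gaussMap^[n] y → x = y := by
    intro x hx y hy n hn
    by_contra hne
    obtain ⟨-, hpos⟩ := hscr x hx y hy hne
    have hev : ∀ᶠ m in atTop,
        |gaussMap^[m] x - gaussMap^[m] y| = (fun _ : ℕ => (0:ℝ)) m := by
      filter_upwards [eventually_ge_atTop n] with m hm
      obtain ⟨k, rfl⟩ := Nat.exists_eq_add_of_le hm
      have : gaussMap^[n + k] x = gaussMap^[n + k] y := by
        rw [add_comm, Function.iterate_add_apply, Function.iterate_add_apply, hn]
      simp [this]
    have hls : limsup (fun m : ℕ => |gaussMap^[m] x - gaussMap^[m] y|) atTop = 0 := by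
      rw [limsup_congr hev, limsup_const]
    rw [hls] at hpos
    exact lt_irrefl _ hpos
  -- irrationals are measurable
  have hirrm : MeasurableSet {z : ℝ | Irrational z} := by
    have : {z : ℝ | Irrational z} = (Set.range ((↑) : ℚ → ℝ))ᶜ := rfl
    rw [this]
    exact ((Set.countable_range _).measurableSet).compl
  -- the key estimate
  have key : ∀ n : ℕ, volume B ≤ ENNReal.ofReal (2 * (1/2:ℝ)^n) := by
    intro n
    set In := {w : List ℕ // w.length = n ∧ OKW w} with hIn
    set E : In → Set ℝ := fun w =>
      (Set.Icc (0:ℝ) 1 ∩ {z | Irrational z}) ∩ (psiW w.1) ⁻¹' B with hE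
    have hEm : ∀ w, MeasurableSet (E w) := fun w =>
      (measurableSet_Icc.inter hirrm).inter ((psiW_measurable w.1) hBm)
    have hEsub : ∀ w, E w ⊆ Set.Icc (0:ℝ) 1 := fun w z hz => hz.1.1
    have hEG : ∀ w : In, ∀ z ∈ E w, G z := by
      rintro w z ⟨⟨⟨hz0, hz1⟩, hzi⟩, -⟩
      refine ⟨hzi, lt_of_le_of_ne hz0 ?_, lt_of_le_of_ne hz1 ?_⟩
      · intro h; exact hzi ⟨0, by rw [Rat.cast_zero, ← h]⟩
      · intro h; exact hzi ⟨1, by rw [Rat.cast_one, h]⟩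
    -- covering
    have hcover : B ⊆ ⋃ w : In, psiW w.1 '' E w := by
      intro x hx
      have hx' := hG x hx
      have hz : G (gaussMap^[n] x) := hx'.gauss_iter n
      refine Set.mem_iUnion.2 ⟨⟨wd n x, wd_length n x, wd_okw hx' n⟩, ?_⟩
      refine ⟨gaussMap^[n] x, ⟨⟨⟨hz.2.1.le, hz.2.2.le⟩, hz.1⟩, ?_⟩, psiW_wd hx' n⟩
      show psiW (wd n x) (gaussMap^[n] x) ∈ B
      rw [psiW_wd hx' n]; exact hx
    -- disjointness
    have hdisj : Pairwise (Function.onFun Disjoint E) := by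
      intro w w' hne
      rw [Function.onFun, Set.disjoint_left]
      intro z hzw hzw'
      have hGz : G z := hEG w z hzw
      have hxB : psiW w.1 z ∈ B := hzw.2
      have hyB : psiW w'.1 z ∈ B := hzw'.2
      have hx' : gaussMap^[n] (psiW w.1 z) = z := by
        have h := gauss_iter_psiW w.2.2 hGz
        rw [w.2.1] at h; exact h
      have hy' : gaussMap^[n] (psiW w'.1 z) = z := by
        have h := gauss_iter_psiW w'.2.2 hGz
        rw [w'.2.1] at h; exact h
      have heq : psiW w.1 z = psiW w'.1 z :=
        hinj _ hxB _ hyB n (by rw [hx', hy'])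
      exact hne (Subtype.ext
        (psiW_inj hGz w.2.2 w'.2.2 (w.2.1.trans w'.2.1.symm) heq))
    -- Lipschitz constant
    set K : ℝ≥0 := ⟨2 * (1/2:ℝ)^n, by positivity⟩ with hK
    have hlip : ∀ w : In, LipschitzOnWith K (psiW w.1) (Set.Icc (0:ℝ) 1) := by
      intro w
      rw [lipschitzOnWith_iff_dist_le_mul]
      intro s hs t ht
      have h := lip_word n w.1 (le_of_eq w.2.1) w.2.2 s hs t ht
      rw [w.2.1] at h
      rw [Real.dist_eq, Real.dist_eq]; exact h
    have himage : ∀ w : In, volume (psiW w.1 '' E w) ≤ (K : ℝ≥0∞) * volume (E w) := by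
      intro w
      have h := ((hlip w).mono (hEsub w)).hausdorffMeasure_image_le
        (zero_le_one : (0:ℝ) ≤ 1)
      rw [MeasureTheory.hausdorffMeasure_real] at h
      simpa using h
    calc volume B ≤ volume (⋃ w : In, psiW w.1 '' E w) := measure_mono hcover
      _ ≤ ∑' w : In, volume (psiW w.1 '' E w) := measure_iUnion_le _
      _ ≤ ∑' w : In, (K : ℝ≥0∞) * volume (E w) := ENNReal.tsum_le_tsum himage
      _ = (K : ℝ≥0∞) * ∑' w : In, volume (E w) := ENNReal.tsum_mul_left
      _ = (K : ℝ≥0∞) * volume (⋃ w : In, E w) := by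
          congr 1
          exact (measure_iUnion hdisj hEm).symm
      _ ≤ (K : ℝ≥0∞) * volume (Set.Icc (0:ℝ) 1) :=
          mul_le_mul_right (measure_mono (Set.iUnion_subset hEsub)) _
      _ ≤ (K : ℝ≥0∞) * 1 := by
          rw [Real.volume_Icc]
          exact mul_le_mul_right (by norm_num) _
      _ = ENNReal.ofReal (2 * (1/2:ℝ)^n) := by
          rw [mul_one, ENNReal.ofReal_eq_coe_nnreal (by positivity)]; rfl
  -- conclude
  have htend : Tendsto (fun n : ℕ => ENNReal.ofReal (2 * (1/2:ℝ)^n)) atTop (𝓝 0) := by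
    have h1 : Tendsto (fun n : ℕ => 2 * (1/2:ℝ)^n) atTop (𝓝 0) := by
      simpa using (tendsto_pow_atTop_nhds_zero_of_lt_one
        (by norm_num : (0:ℝ) ≤ 1/2) (by norm_num : (1/2:ℝ) < 1)).const_mul (2:ℝ)
    simpa [ENNReal.ofReal_zero, Function.comp_def] using
      (ENNReal.continuous_ofReal.tendsto 0).comp h1
  have hle : volume B ≤ 0 := ge_of_tendsto' htend key
  exact le_antisymm hle zero_le
end

section
/- Every maximal scrambled set of the Gauss system is uncountable. -/
open MeasureTheory Filter Set Topology

/-- A scrambled set for the Gauss system: a set of irrationals in `[0,1)` such that every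
pair of distinct points is a Li–Yorke pair. -/
def GaussScrambled (S : Set ℝ) : Prop :=
  S ⊆ {x : ℝ | x ∈ Set.Ico (0 : ℝ) 1 ∧ Irrational x} ∧
    ∀ x ∈ S, ∀ y ∈ S, x ≠ y →
      liminf (fun n : ℕ => |gaussMap^[n] x - gaussMap^[n] y|) atTop = 0 ∧
        0 < limsup (fun n : ℕ => |gaussMap^[n] x - gaussMap^[n] y|) atTop

/-- finite continued fraction approximants with tail 0 -/
noncomputable def cfApp : ℕ → (ℕ → ℕ) → ℝ
  | 0, _ => 0
  | (n+1), a => ((a 0 : ℝ) + cfApp n (fun i => a (i+1)))⁻¹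

lemma cfApp_nonneg (n : ℕ) (a : ℕ → ℕ) : 0 ≤ cfApp n a := by
  induction n generalizing a with
  | zero => simp [cfApp]
  | succ n ih =>
    simp only [cfApp]
    exact inv_nonneg.mpr (add_nonneg (Nat.cast_nonneg _) (ih _))

lemma cfApp_le_one (n : ℕ) (a : ℕ → ℕ) (h1 : ∀ i, 1 ≤ a i) : cfApp n a ≤ 1 := by
  cases n with
  | zero => simp [cfApp]
  | succ n =>
    simp only [cfApp]
    rw [inv_le_one_iff₀]
    right
    have : (1:ℝ) ≤ (a 0 : ℝ) := by exact_mod_cast h1 0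
    have := cfApp_nonneg n (fun i => a (i+1))
    linarith

/-- two-step contraction -/
lemma twostep (c c' : ℕ) (hc : 1 ≤ c) (hc' : 1 ≤ c') (s t : ℝ)
    (hs0 : 0 ≤ s) (ht0 : 0 ≤ t) :
    |((c:ℝ) + ((c':ℝ) + s)⁻¹)⁻¹ - ((c:ℝ) + ((c':ℝ) + t)⁻¹)⁻¹| ≤ (1/4) * |s - t| := by
  have hc1 : (1:ℝ) ≤ (c:ℝ) := by exact_mod_cast hc
  have hc'1 : (1:ℝ) ≤ (c':ℝ) := by exact_mod_cast hc'
  have hcs : (0:ℝ) < (c':ℝ) + s := by linarith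
  have hct : (0:ℝ) < (c':ℝ) + t := by linarith
  have hA : (0:ℝ) < (c:ℝ) + ((c':ℝ)+s)⁻¹ := by positivity
  have hB : (0:ℝ) < (c:ℝ) + ((c':ℝ)+t)⁻¹ := by positivity
  have key : ((c:ℝ) + ((c':ℝ) + s)⁻¹)⁻¹ - ((c:ℝ) + ((c':ℝ) + t)⁻¹)⁻¹
      = (s - t) / (((c:ℝ)*((c':ℝ)+s)+1) * ((c:ℝ)*((c':ℝ)+t)+1)) := by
    field_simp
    ring
  rw [key, abs_div]
  have hden : (4:ℝ) ≤ |((c:ℝ)*((c':ℝ)+s)+1) * ((c:ℝ)*((c':ℝ)+t)+1)| := by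
    have h1 : (2:ℝ) ≤ (c:ℝ)*((c':ℝ)+s)+1 := by nlinarith
    have h2 : (2:ℝ) ≤ (c:ℝ)*((c':ℝ)+t)+1 := by nlinarith
    rw [abs_of_pos (by nlinarith)]
    nlinarith
  rw [div_le_iff₀ (by linarith)]
  calc |s - t| = (1/4) * |s-t| * 4 := by ring
    _ ≤ 1/4 * |s - t| * |((c:ℝ)*((c':ℝ)+s)+1) * ((c:ℝ)*((c':ℝ)+t)+1)| := by
        have : (0:ℝ) ≤ |s - t| := abs_nonneg _
        nlinarith
lemma cfApp_succ_shift (n : ℕ) (a : ℕ → ℕ) :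
    cfApp (n+1) a = ((a 0 : ℝ) + cfApp n (fun i => a (i+1)))⁻¹ := rfl

lemma cfApp_diff (r : ℕ) : ∀ (a : ℕ → ℕ), (∀ i, 1 ≤ a i) → ∀ i j,
    |cfApp (2*r+i) a - cfApp (2*r+j) a| ≤ (1/4:ℝ)^r := by
  induction r with
  | zero =>
    intro a h1 i j
    simp only [Nat.mul_zero, Nat.zero_add, pow_zero]
    have b1 := cfApp_nonneg i a
    have b2 := cfApp_nonneg j a
    have c1 := cfApp_le_one i a h1
    have c2 := cfApp_le_one j a h1
    rw [abs_le]; constructor <;> linarith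
  | succ r ih =>
    intro a h1 i j
    have e1 : 2*(r+1)+i = (2*r+i) + 1 + 1 := by ring
    have e2 : 2*(r+1)+j = (2*r+j) + 1 + 1 := by ring
    rw [e1, e2, cfApp_succ_shift, cfApp_succ_shift, cfApp_succ_shift, cfApp_succ_shift]
    have h2 : ∀ i, 1 ≤ (fun i => a (i+1+1)) i := fun i => h1 _
    have key := twostep (a 0) (a 1) (h1 0) (h1 1)
      (cfApp (2*r+i) (fun i => a (i+1+1))) (cfApp (2*r+j) (fun i => a (i+1+1)))
      (cfApp_nonneg _ _) (cfApp_nonneg _ _)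
    have ihh := ih (fun i => a (i+1+1)) h2 i j
    calc |((a 0:ℝ) + ((a 1:ℝ) + cfApp (2*r+i) fun i => a (i+1+1))⁻¹)⁻¹ -
          ((a 0:ℝ) + ((a 1:ℝ) + cfApp (2*r+j) fun i => a (i+1+1))⁻¹)⁻¹|
        ≤ (1/4) * |cfApp (2*r+i) (fun i => a (i+1+1)) - cfApp (2*r+j) (fun i => a (i+1+1))| := key
      _ ≤ (1/4) * (1/4:ℝ)^r := by linarith [abs_nonneg (cfApp (2*r+i) (fun i => a (i+1+1)) - cfApp (2*r+j) (fun i => a (i+1+1)))]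
      _ = (1/4:ℝ)^(r+1) := by ring

lemma cfApp_cauchy (a : ℕ → ℕ) (h1 : ∀ i, 1 ≤ a i) : CauchySeq (fun n => cfApp n a) := by
  apply cauchySeq_of_le_geometric (1/2) 2 (by norm_num)
  intro n
  have e1 : n = 2*(n/2) + n % 2 := (Nat.div_add_mod' n 2).symm ▸ by omega
  have e2 : n + 1 = 2*(n/2) + (n % 2 + 1) := by omega
  rw [Real.dist_eq]
  calc |cfApp n a - cfApp (n+1) a| = |cfApp (2*(n/2) + n%2) a - cfApp (2*(n/2) + (n%2+1)) a| := by
        rw [← e1, ← e2]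
    _ ≤ (1/4:ℝ)^(n/2) := cfApp_diff (n/2) a h1 _ _
    _ ≤ 2 * (1/2:ℝ)^n := by
        have : (1/4:ℝ)^(n/2) = (1/2:ℝ)^(2*(n/2)) := by
          rw [pow_mul]; norm_num
        rw [this]
        have h2 : n - 1 ≤ 2*(n/2) := by omega
        have hb : (1/2:ℝ)^(2*(n/2)) ≤ (1/2:ℝ)^(n-1) :=
          pow_le_pow_of_le_one (by norm_num) (by norm_num) h2
        have : (1/2:ℝ)^(n-1) ≤ 2 * (1/2:ℝ)^n := by
          cases n with
          | zero => norm_num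
          | succ m => simp only [Nat.add_sub_cancel]
                      rw [pow_succ]; ring_nf; linarith [pow_nonneg (by norm_num : (0:ℝ) ≤ 1/2) m]
        linarith

/-- The value of the infinite continued fraction with digits `a`. -/
noncomputable def cfVal (a : ℕ → ℕ) : ℝ := limUnder atTop (fun n => cfApp n a)

lemma cfVal_tendsto (a : ℕ → ℕ) (h1 : ∀ i, 1 ≤ a i) :
    Tendsto (fun n => cfApp n a) atTop (nhds (cfVal a)) :=
  (cfApp_cauchy a h1).tendsto_limUnder

lemma cfVal_mem (a : ℕ → ℕ) (h1 : ∀ i, 1 ≤ a i) :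
    ((a 0:ℝ)+1)⁻¹ ≤ cfVal a ∧ cfVal a ≤ (a 0:ℝ)⁻¹ := by
  have ht := (cfVal_tendsto a h1).comp (tendsto_add_atTop_nat 1)
  have ha : (0:ℝ) < (a 0 : ℝ) := by exact_mod_cast h1 0
  constructor
  · apply ge_of_tendsto ht
    filter_upwards with n
    show ((a 0:ℝ)+1)⁻¹ ≤ cfApp (n+1) a
    rw [cfApp_succ_shift]
    have ha : (0:ℝ) < (a 0 : ℝ) := by exact_mod_cast h1 0
    apply inv_anti₀ (by linarith [cfApp_nonneg n (fun i => a (i+1))])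
    linarith [cfApp_le_one n (fun i => a (i+1)) (fun i => h1 _)]
  · apply le_of_tendsto ht
    filter_upwards with n
    show cfApp (n+1) a ≤ (a 0:ℝ)⁻¹
    rw [cfApp_succ_shift]
    apply inv_anti₀ ha
    linarith [cfApp_nonneg n (fun i => a (i+1))]

lemma cfVal_rec (a : ℕ → ℕ) (h1 : ∀ i, 1 ≤ a i) :
    cfVal a = ((a 0:ℝ) + cfVal (fun i => a (i+1)))⁻¹ := by
  have h1' : ∀ i, 1 ≤ (fun i => a (i+1)) i := fun i => h1 _
  have ht := (cfVal_tendsto a h1).comp (tendsto_add_atTop_nat 1)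
  have ht2 : Tendsto (fun n => ((a 0:ℝ) + cfApp n (fun i => a (i+1)))⁻¹) atTop
      (nhds (((a 0:ℝ) + cfVal (fun i => a (i+1)))⁻¹)) := by
    apply Tendsto.inv₀
    · exact (tendsto_const_nhds.add (cfVal_tendsto _ h1'))
    · have := (cfVal_mem (fun i => a (i+1)) h1').1
      have ha : (1:ℝ) ≤ (a 0 : ℝ) := by exact_mod_cast h1 0
      have : (0:ℝ) < cfVal (fun i => a (i+1)) := lt_of_lt_of_le (by positivity) this
      positivity
  exact tendsto_nhds_unique ht ht2
lemma cfVal_pos (a : ℕ → ℕ) (h1 : ∀ i, 1 ≤ a i) : 0 < cfVal a := by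
  have := (cfVal_mem a h1).1
  have ha : (0:ℝ) < (a 0 : ℝ) := by exact_mod_cast h1 0
  have : (0:ℝ) < ((a 0:ℝ)+1)⁻¹ := by positivity
  linarith [(cfVal_mem a h1).1]

lemma cfVal_lt (a : ℕ → ℕ) (h1 : ∀ i, 1 ≤ a i) : cfVal a < (a 0:ℝ)⁻¹ := by
  rw [cfVal_rec a h1]
  have ha : (0:ℝ) < (a 0 : ℝ) := by exact_mod_cast h1 0
  have hw : 0 < cfVal (fun i => a (i+1)) := cfVal_pos _ (fun i => h1 _)
  apply inv_strictAnti₀ ha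
  linarith

lemma cfVal_lt_one (a : ℕ → ℕ) (h1 : ∀ i, 1 ≤ a i) : cfVal a < 1 := by
  have ha : (1:ℝ) ≤ (a 0 : ℝ) := by exact_mod_cast h1 0
  have := cfVal_lt a h1
  have : (a 0:ℝ)⁻¹ ≤ 1 := by
    rw [inv_le_one_iff₀]; right; exact ha
  linarith [cfVal_lt a h1]

lemma cfVal_gt (a : ℕ → ℕ) (h1 : ∀ i, 1 ≤ a i) : ((a 0:ℝ)+1)⁻¹ < cfVal a := by
  rw [cfVal_rec a h1]
  have ha : (0:ℝ) < (a 0 : ℝ) := by exact_mod_cast h1 0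
  have hw : 0 < cfVal (fun i => a (i+1)) := cfVal_pos _ (fun i => h1 _)
  have hw1 : cfVal (fun i => a (i+1)) < 1 := cfVal_lt_one _ (fun i => h1 _)
  apply inv_strictAnti₀ (by linarith)
  linarith

lemma cfVal_inv (a : ℕ → ℕ) (h1 : ∀ i, 1 ≤ a i) :
    (cfVal a)⁻¹ = (a 0:ℝ) + cfVal (fun i => a (i+1)) := by
  rw [cfVal_rec a h1, inv_inv]

lemma cfVal_floor (a : ℕ → ℕ) (h1 : ∀ i, 1 ≤ a i) : ⌊(cfVal a)⁻¹⌋ = (a 0 : ℤ) := by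
  rw [cfVal_inv a h1]
  have hw : 0 < cfVal (fun i => a (i+1)) := cfVal_pos _ (fun i => h1 _)
  have hw1 : cfVal (fun i => a (i+1)) < 1 := cfVal_lt_one _ (fun i => h1 _)
  have : ((a 0 : ℤ) : ℝ) = ((a 0 : ℕ) : ℝ) := by push_cast; ring
  rw [Int.floor_eq_iff]
  constructor
  · push_cast; linarith
  · push_cast; linarith

lemma gaussMap_cfVal' (a : ℕ → ℕ) (h1 : ∀ i, 1 ≤ a i) :
    gaussMap (cfVal a) = cfVal (fun i => a (i+1)) := by
  unfold gaussMap
  rw [Int.fract, cfVal_floor a h1, cfVal_inv a h1]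
  push_cast; ring

lemma gaussMap_iter_cfVal (n : ℕ) : ∀ (a : ℕ → ℕ), (∀ i, 1 ≤ a i) →
    gaussMap^[n] (cfVal a) = cfVal (fun i => a (n + i)) := by
  induction n with
  | zero => intro a h1; simp
  | succ n ih =>
    intro a h1
    rw [Function.iterate_succ_apply, gaussMap_cfVal' a h1, ih _ (fun i => h1 _)]
    congr 1
    funext i
    congr 1
    omega
lemma gaussMap_mem (x : ℝ) (hx : x ∈ Set.Ioo (0:ℝ) 1) (hirr : Irrational x) :
    gaussMap x ∈ Set.Ioo (0:ℝ) 1 ∧ Irrational (gaussMap x) := by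
  have hinv : Irrational x⁻¹ := hirr.inv
  have hfr : Irrational (Int.fract x⁻¹) := by
    rw [Int.fract]
    exact hinv.sub_intCast _
  refine ⟨⟨?_, ?_⟩, hfr⟩
  · rcases lt_or_eq_of_le (Int.fract_nonneg x⁻¹) with h | h
    · exact h
    · exfalso; exact hfr ⟨0, by rw [← h]; simp⟩
  · exact Int.fract_lt_one _

lemma gaussMap_iter_mem (x : ℝ) (hx : x ∈ Set.Ioo (0:ℝ) 1) (hirr : Irrational x) (n : ℕ) :
    gaussMap^[n] x ∈ Set.Ioo (0:ℝ) 1 ∧ Irrational (gaussMap^[n] x) := by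
  induction n with
  | zero => exact ⟨hx, hirr⟩
  | succ n ih =>
    rw [Function.iterate_succ_apply']
    exact gaussMap_mem _ ih.1 ih.2

lemma gaussMap_rat (p q : ℕ) (hp : 0 < p) (hpq : p < q) :
    gaussMap ((p:ℝ)/q) = ((q % p : ℕ):ℝ)/p := by
  have hp' : (0:ℝ) < p := by exact_mod_cast hp
  have hq'' : 0 < q := lt_trans hp hpq
  have hq' : (0:ℝ) < q := by exact_mod_cast hq''
  unfold gaussMap
  have hinv : ((p:ℝ)/q)⁻¹ = (q:ℝ)/p := by
    rw [inv_div]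
  rw [hinv]
  have hdm : (q:ℝ)/p = ((q % p : ℕ):ℝ)/p + ((q / p : ℕ):ℝ) := by
    have hsum : ((q % p:ℕ):ℝ) + ((q / p:ℕ):ℝ) * p = q := by exact_mod_cast Nat.mod_add_div' q p
    field_simp
    linarith
  rw [hdm, Int.fract_add_natCast, Int.fract_eq_self.mpr]
  constructor
  · positivity
  · rw [div_lt_one hp']
    exact_mod_cast Nat.mod_lt q hp

lemma rat_escape (p : ℕ) : ∀ q : ℕ, 0 < p → p < q →
    ∃ n, gaussMap^[n] ((p:ℝ)/q) ∉ Set.Ioo (0:ℝ) 1 := by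
  induction p using Nat.strong_induction_on with
  | _ p ih =>
    intro q hp hpq
    by_cases h : q % p = 0
    · refine ⟨1, ?_⟩
      rw [Function.iterate_one, gaussMap_rat p q hp hpq, h]
      intro hmem
      rw [Nat.cast_zero, zero_div] at hmem
      exact lt_irrefl 0 hmem.1
    · obtain ⟨n, hn⟩ := ih (q % p) (Nat.mod_lt q hp) p (Nat.pos_of_ne_zero h) (Nat.mod_lt q hp)
      exact ⟨n+1, by rw [Function.iterate_succ_apply, gaussMap_rat p q hp hpq]; exact hn⟩

lemma cfVal_irrational (a : ℕ → ℕ) (h1 : ∀ i, 1 ≤ a i) : Irrational (cfVal a) := by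
  rintro ⟨q, hq⟩
  have hx0 : 0 < cfVal a := cfVal_pos a h1
  have hx1 : cfVal a < 1 := cfVal_lt_one a h1
  have hq0 : (0:ℝ) < (q:ℝ) := by rw [hq]; exact hx0
  have hq1 : (q:ℝ) < 1 := by rw [hq]; exact hx1
  have hnum : 0 < q.num := by
    rw [Rat.num_pos]
    exact_mod_cast hq0
  set p : ℕ := q.num.toNat with hp
  have hcast : ((p:ℕ):ℝ) = (q.num : ℝ) := by
    rw [hp]; exact_mod_cast congrArg Int.cast (Int.toNat_of_nonneg hnum.le)
  have hqcast : (q:ℝ) = (p:ℝ)/(q.den:ℝ) := by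
    rw [Rat.cast_def, hcast]
  have hden : (0:ℝ) < (q.den:ℝ) := by exact_mod_cast q.den_pos
  have hplt : p < q.den := by
    have : (p:ℝ) < (q.den:ℝ) := by
      rw [hqcast, div_lt_one hden] at hq1
      exact hq1
    exact_mod_cast this
  obtain ⟨n, hn⟩ := rat_escape p q.den (by omega) hplt
  apply hn
  rw [← hqcast, hq, gaussMap_iter_cfVal n a h1]
  exact ⟨cfVal_pos _ (fun i => h1 _), cfVal_lt_one _ (fun i => h1 _)⟩
lemma floor_inv_pos (u : ℝ) (hu : u ∈ Set.Ioo (0:ℝ) 1) : 1 ≤ ⌊u⁻¹⌋ := by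
  rw [Int.le_floor]
  push_cast
  rw [le_inv_comm₀ one_pos hu.1]
  simpa using hu.2.le

lemma u_gauss_bound (u : ℝ) (hu : u ∈ Set.Ioo (0:ℝ) 1) : u * gaussMap u < 1/2 := by
  have hb := floor_inv_pos u hu
  set b := ⌊u⁻¹⌋ with hbdef
  have hbu : u⁻¹ < (b:ℝ) + 1 := Int.lt_floor_add_one u⁻¹
  have hub : (1:ℝ) ≤ (b:ℝ) := by exact_mod_cast hb
  have hg : gaussMap u = u⁻¹ - b := by rw [gaussMap, Int.fract, hbdef]
  have hue : u * u⁻¹ = 1 := mul_inv_cancel₀ (ne_of_gt hu.1)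
  have h1 : u * gaussMap u = 1 - b * u := by rw [hg]; ring_nf; nlinarith [hue]
  rw [h1]
  -- b*u > b/(b+1) ≥ 1/2
  have hu1 : u > ((b:ℝ)+1)⁻¹ := by
    rw [gt_iff_lt, inv_lt_comm₀ (by linarith) hu.1]
    exact hbu
  have : (b:ℝ) * u > (b:ℝ)/((b:ℝ)+1) := by
    rw [div_eq_mul_inv]
    exact mul_lt_mul_of_pos_left hu1 (by linarith)
  have h2 : (1:ℝ)/2 ≤ (b:ℝ)/((b:ℝ)+1) := by
    rw [div_le_div_iff₀ (by norm_num) (by linarith)]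
    linarith
  linarith

lemma gauss_sub (u v : ℝ) (hu : u ∈ Set.Ioo (0:ℝ) 1) (hv : v ∈ Set.Ioo (0:ℝ) 1)
    (hfl : ⌊u⁻¹⌋ = ⌊v⁻¹⌋) : |u - v| = (u * v) * |gaussMap u - gaussMap v| := by
  have h : gaussMap u - gaussMap v = u⁻¹ - v⁻¹ := by
    rw [gaussMap, gaussMap, Int.fract, Int.fract, hfl]; ring
  rw [h]
  have hne : u * v ≠ 0 := ne_of_gt (mul_pos hu.1 hv.1)
  have hu0 : u ≠ 0 := ne_of_gt hu.1
  have hv0 : v ≠ 0 := ne_of_gt hv.1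
  have h2 : u⁻¹ - v⁻¹ = (v - u)/(u*v) := by
    field_simp
  rw [h2, abs_div, abs_of_pos (mul_pos hu.1 hv.1), abs_sub_comm v u,
    mul_comm (u*v) (|u-v| / (u*v)), div_mul_cancel₀ _ hne]

lemma pairstep (u v : ℝ) (hu : u ∈ Set.Ioo (0:ℝ) 1) (hv : v ∈ Set.Ioo (0:ℝ) 1)
    (hu1 : gaussMap u ∈ Set.Ioo (0:ℝ) 1) (hv1 : gaussMap v ∈ Set.Ioo (0:ℝ) 1)
    (hfl0 : ⌊u⁻¹⌋ = ⌊v⁻¹⌋) (hfl1 : ⌊(gaussMap u)⁻¹⌋ = ⌊(gaussMap v)⁻¹⌋) :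
    |u - v| ≤ (1/4) * |gaussMap (gaussMap u) - gaussMap (gaussMap v)| := by
  have e1 := gauss_sub u v hu hv hfl0
  have e2 := gauss_sub (gaussMap u) (gaussMap v) hu1 hv1 hfl1
  have b1 := u_gauss_bound u hu
  have b2 := u_gauss_bound v hv
  have habs : (0:ℝ) ≤ |gaussMap (gaussMap u) - gaussMap (gaussMap v)| := abs_nonneg _
  have key : |u - v| = (u * gaussMap u) * (v * gaussMap v) *
      |gaussMap (gaussMap u) - gaussMap (gaussMap v)| := by
    rw [e1, e2]; ring
  rw [key]
  have p1 : 0 ≤ u * gaussMap u := mul_nonneg hu.1.le hu1.1.le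
  have p2 : 0 ≤ v * gaussMap v := mul_nonneg hv.1.le hv1.1.le
  have hc : u * gaussMap u * (v * gaussMap v) ≤ 1/4 := by nlinarith
  exact mul_le_mul_of_nonneg_right hc habs

lemma close (r : ℕ) : ∀ u v : ℝ, (∀ n, gaussMap^[n] u ∈ Set.Ioo (0:ℝ) 1) →
    (∀ n, gaussMap^[n] v ∈ Set.Ioo (0:ℝ) 1) →
    (∀ i < 2*r, ⌊(gaussMap^[i] u)⁻¹⌋ = ⌊(gaussMap^[i] v)⁻¹⌋) →
    |u - v| ≤ (1/4:ℝ)^r := by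
  induction r with
  | zero =>
    intro u v hu hv _
    have h1 := hu 0; have h2 := hv 0
    simp only [Function.iterate_zero, id] at h1 h2
    rw [pow_zero, abs_le]
    constructor <;> [linarith [h1.1, h1.2, h2.1, h2.2]; linarith [h1.1, h1.2, h2.1, h2.2]]
  | succ r ih =>
    intro u v hu hv hagree
    have hu0 := hu 0; have hv0 := hv 0
    have hu1 := hu 1; have hv1 := hv 1
    simp only [Function.iterate_zero, Function.iterate_one, id] at hu0 hv0 hu1 hv1
    have hfl0 := hagree 0 (by omega)
    have hfl1 := hagree 1 (by omega)
    simp only [Function.iterate_zero, Function.iterate_one, id] at hfl0 hfl1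
    have step := pairstep u v hu0 hv0 hu1 hv1 hfl0 hfl1
    have ihh := ih (gaussMap (gaussMap u)) (gaussMap (gaussMap v))
      (fun n => by
        have := hu (n + 2)
        rwa [Function.iterate_add_apply, Function.iterate_succ_apply, Function.iterate_one] at this)
      (fun n => by
        have := hv (n + 2)
        rwa [Function.iterate_add_apply, Function.iterate_succ_apply, Function.iterate_one] at this)
      (fun i hi => by
        have := hagree (i + 2) (by omega)
        rwa [Function.iterate_add_apply, Function.iterate_succ_apply, Function.iterate_one] at this)
    calc |u - v| ≤ (1/4) * |gaussMap (gaussMap u) - gaussMap (gaussMap v)| := step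
      _ ≤ (1/4) * (1/4:ℝ)^r := by linarith [abs_nonneg (gaussMap (gaussMap u) - gaussMap (gaussMap v))]
      _ = (1/4:ℝ)^(r+1) := by ring

lemma floor_one_gt_half (u : ℝ) (hu : u ∈ Set.Ioo (0:ℝ) 1) (h : ⌊u⁻¹⌋ = 1) : 1/2 < u := by
  have := Int.lt_floor_add_one u⁻¹
  rw [h] at this
  have h2 : u⁻¹ < 2 := by push_cast at this; linarith
  rw [inv_lt_comm₀ hu.1 (by norm_num)] at h2
  linarith

lemma floor_ge_two_le_half (u : ℝ) (hu : u ∈ Set.Ioo (0:ℝ) 1) (h : 2 ≤ ⌊u⁻¹⌋) : u ≤ 1/2 := by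
  have h2 : (2:ℝ) ≤ u⁻¹ := by
    calc (2:ℝ) = ((2:ℤ):ℝ) := by norm_num
    _ ≤ ((⌊u⁻¹⌋:ℤ):ℝ) := by exact_mod_cast h
    _ ≤ u⁻¹ := Int.floor_le _
  rw [le_inv_comm₀ (by norm_num) hu.1] at h2
  linarith
/-- digits of a real number under the Gauss map -/
noncomputable def Dg (x : ℝ) (n : ℕ) : ℕ := (⌊(gaussMap^[n] x)⁻¹⌋).toNat

lemma Dg_cast (x : ℝ) (hx : x ∈ Set.Ioo (0:ℝ) 1) (hirr : Irrational x) (n : ℕ) :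
    (Dg x n : ℤ) = ⌊(gaussMap^[n] x)⁻¹⌋ := by
  have h := floor_inv_pos _ (gaussMap_iter_mem x hx hirr n).1
  exact Int.toNat_of_nonneg (by omega)

lemma Dg_pos (x : ℝ) (hx : x ∈ Set.Ioo (0:ℝ) 1) (hirr : Irrational x) (n : ℕ) :
    1 ≤ Dg x n := by
  have h := floor_inv_pos _ (gaussMap_iter_mem x hx hirr n).1
  have := Dg_cast x hx hirr n
  omega

/-- block start positions -/
def BP : ℕ → ℕ
  | 0 => 0
  | (k+1) => BP k + (k+3)

lemma BP_succ (k : ℕ) : BP (k+1) = BP k + (k+3) := rfl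

lemma le_BP (k : ℕ) : k ≤ BP k := by
  induction k with
  | zero => simp [BP]
  | succ k ih => rw [BP_succ]; omega

lemma BP_strictMono : StrictMono BP := by
  apply strictMono_nat_of_lt_succ
  intro n; rw [BP_succ]; omega

/-- index of the block containing position n -/
def bIdx (n : ℕ) : ℕ := Nat.findGreatest (fun k => BP k ≤ n) (n+1)

lemma bIdx_le (n : ℕ) : BP (bIdx n) ≤ n :=
  Nat.findGreatest_spec (P := fun k => BP k ≤ n) (m := 0) (by omega) (by simp [BP])

lemma bIdx_lt (n : ℕ) : n < BP (bIdx n + 1) := by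
  by_contra h
  push_neg at h
  have hk : bIdx n + 1 ≤ n + 1 := by have := le_BP (bIdx n + 1); omega
  exact Nat.findGreatest_is_greatest (P := fun k => BP k ≤ n) (n := n+1)
    (Nat.lt_succ_self _) hk h

lemma bIdx_eq (k n : ℕ) (h1 : BP k ≤ n) (h2 : n < BP (k+1)) : bIdx n = k := by
  have ha : k ≤ bIdx n := Nat.le_findGreatest (by have := le_BP k; omega) h1
  have hb : bIdx n ≤ k := by
    by_contra h
    push_neg at h
    have : BP (k+1) ≤ BP (bIdx n) := BP_strictMono.monotone h
    have := bIdx_le n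
    omega
  omega

/-- the digit sequence of the new point, given an enumeration f of S -/
noncomputable def seqA (f : ℕ → ℝ) (n : ℕ) : ℕ :=
  let k := bIdx n
  let x := f (Nat.unpair k).1
  if n = BP k then (if Dg x (BP k) = 1 then 3 else 1)
  else if n = BP k + 1 then (if Dg x (BP k) = 1 then 1 else 2)
  else Dg x n

lemma seqA_pos (f : ℕ → ℝ) (hf : ∀ j, f j ∈ Set.Ioo (0:ℝ) 1 ∧ Irrational (f j)) (n : ℕ) :
    1 ≤ seqA f n := by
  unfold seqA
  simp only
  split
  · split <;> omega
  · split
    · split <;> omega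
    · exact Dg_pos _ (hf _).1 (hf _).2 n

lemma seqA_start (f : ℕ → ℝ) (k : ℕ) :
    seqA f (BP k) = (if Dg (f (Nat.unpair k).1) (BP k) = 1 then 3 else 1) := by
  unfold seqA
  have hb : bIdx (BP k) = k := bIdx_eq k (BP k) le_rfl (by rw [BP_succ]; omega)
  simp [hb]

lemma seqA_start1 (f : ℕ → ℝ) (k : ℕ) :
    seqA f (BP k + 1) = (if Dg (f (Nat.unpair k).1) (BP k) = 1 then 1 else 2) := by
  unfold seqA
  have hb : bIdx (BP k + 1) = k := bIdx_eq k (BP k + 1) (by omega) (by rw [BP_succ]; omega)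
  simp [hb]

lemma seqA_copy (f : ℕ → ℝ) (k i : ℕ) (hik : i ≤ k) :
    seqA f (BP k + 2 + i) = Dg (f (Nat.unpair k).1) (BP k + 2 + i) := by
  unfold seqA
  have hb : bIdx (BP k + 2 + i) = k := bIdx_eq k _ (by omega) (by rw [BP_succ]; omega)
  simp only [hb]
  rw [if_neg (by omega), if_neg (by omega)]
lemma cfVal_head_lt (b : ℕ → ℕ) (h1 : ∀ i, 1 ≤ b i) (c : ℕ) (hc : b 0 = c) :
    cfVal b < (c:ℝ)⁻¹ := by
  have := cfVal_lt b h1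
  rwa [hc] at this

lemma cfVal_head_gt (b : ℕ → ℕ) (h1 : ∀ i, 1 ≤ b i) (c : ℕ) (hc : b 0 = c) :
    ((c:ℝ)+1)⁻¹ < cfVal b := by
  have := cfVal_gt b h1
  rwa [hc] at this

lemma cfVal_one_two (b : ℕ → ℕ) (h1 : ∀ i, 1 ≤ b i) (hc0 : b 0 = 1) (hc1 : b 1 = 2) :
    2/3 < cfVal b := by
  rw [cfVal_rec b h1, hc0]
  have h1' : ∀ i, 1 ≤ b (i+1) := fun i => h1 _
  have hgt : ((2:ℕ):ℝ)⁻¹⁻¹ + 1 > 0 := by norm_num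
  have hw1 : (1:ℝ)/3 < cfVal (fun i => b (i+1)) := by
    have := cfVal_head_gt (fun i => b (i+1)) h1' 2 hc1
    norm_num at this
    linarith
  have hw2 : cfVal (fun i => b (i+1)) < 1/2 := by
    have := cfVal_head_lt (fun i => b (i+1)) h1' 2 hc1
    norm_num at this
    linarith
  rw [lt_inv_comm₀ (by norm_num) (by push_cast; linarith)]
  push_cast
  linarith

section Construction

variable (f : ℕ → ℝ) (hf : ∀ j, f j ∈ Set.Ioo (0:ℝ) 1 ∧ Irrational (f j))
include hf

lemma digitY (m : ℕ) : ⌊(gaussMap^[m] (cfVal (seqA f)))⁻¹⌋ = (seqA f m : ℤ) := by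
  rw [gaussMap_iter_cfVal m _ (seqA_pos f hf),
    cfVal_floor _ (fun i => seqA_pos f hf _)]
  simp

lemma orbitY (m : ℕ) : gaussMap^[m] (cfVal (seqA f)) ∈ Set.Ioo (0:ℝ) 1 := by
  rw [gaussMap_iter_cfVal m _ (seqA_pos f hf)]
  exact ⟨cfVal_pos _ (fun i => seqA_pos f hf _), cfVal_lt_one _ (fun i => seqA_pos f hf _)⟩

lemma sep (k : ℕ) :
    1/6 ≤ |gaussMap^[BP k] (cfVal (seqA f)) - gaussMap^[BP k] (f (Nat.unpair k).1)| := by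
  obtain ⟨hx, hxi⟩ := hf (Nat.unpair k).1
  have hty : gaussMap^[BP k] (cfVal (seqA f)) = cfVal (fun i => seqA f (BP k + i)) :=
    gaussMap_iter_cfVal _ _ (seqA_pos f hf)
  have h1b : ∀ i, 1 ≤ (fun i => seqA f (BP k + i)) i := fun i => seqA_pos f hf _
  have hb0 : (fun i => seqA f (BP k + i)) 0 = seqA f (BP k) := by simp
  have hxmem := (gaussMap_iter_mem _ hx hxi (BP k)).1
  rw [hty]
  by_cases hD : Dg (f (Nat.unpair k).1) (BP k) = 1
  · have ha : seqA f (BP k) = 3 := by rw [seqA_start, if_pos hD]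
    have hylt : cfVal (fun i => seqA f (BP k + i)) < ((3:ℕ):ℝ)⁻¹ :=
      cfVal_head_lt _ h1b 3 (hb0.trans ha)
    norm_num at hylt
    have hfl : ⌊(gaussMap^[BP k] (f (Nat.unpair k).1))⁻¹⌋ = 1 := by
      have h := Dg_cast (f (Nat.unpair k).1) hx hxi (BP k)
      rw [hD] at h
      omega
    have hxg : 1/2 < gaussMap^[BP k] (f (Nat.unpair k).1) := floor_one_gt_half _ hxmem hfl
    have hy0 : 0 < cfVal (fun i => seqA f (BP k + i)) := cfVal_pos _ h1b
    calc (1:ℝ)/6 ≤ gaussMap^[BP k] (f (Nat.unpair k).1) - cfVal (fun i => seqA f (BP k + i)) := by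
          linarith
      _ ≤ |gaussMap^[BP k] (f (Nat.unpair k).1) - cfVal (fun i => seqA f (BP k + i))| :=
          le_abs_self _
      _ = |cfVal (fun i => seqA f (BP k + i)) - gaussMap^[BP k] (f (Nat.unpair k).1)| :=
          abs_sub_comm _ _
  · have hD2 : 2 ≤ Dg (f (Nat.unpair k).1) (BP k) := by
      have := Dg_pos (f (Nat.unpair k).1) hx hxi (BP k)
      omega
    have ha : seqA f (BP k) = 1 := by rw [seqA_start, if_neg hD]
    have ha1 : seqA f (BP k + 1) = 2 := by rw [seqA_start1, if_neg hD]
    have hygt : 2/3 < cfVal (fun i => seqA f (BP k + i)) := by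
      apply cfVal_one_two _ h1b (hb0.trans ha)
      show seqA f (BP k + 1) = 2
      exact ha1
    have hfl : 2 ≤ ⌊(gaussMap^[BP k] (f (Nat.unpair k).1))⁻¹⌋ := by
      have h := Dg_cast (f (Nat.unpair k).1) hx hxi (BP k)
      omega
    have hxle : gaussMap^[BP k] (f (Nat.unpair k).1) ≤ 1/2 := floor_ge_two_le_half _ hxmem hfl
    calc (1:ℝ)/6 ≤ cfVal (fun i => seqA f (BP k + i)) - gaussMap^[BP k] (f (Nat.unpair k).1) := by
          linarith
      _ ≤ |cfVal (fun i => seqA f (BP k + i)) - gaussMap^[BP k] (f (Nat.unpair k).1)| :=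
          le_abs_self _

lemma cls (k : ℕ) :
    |gaussMap^[BP k + 2] (cfVal (seqA f)) - gaussMap^[BP k + 2] (f (Nat.unpair k).1)|
      ≤ (1/4:ℝ)^(k/2) := by
  obtain ⟨hx, hxi⟩ := hf (Nat.unpair k).1
  apply close (k/2) _ _
    (fun m => by
      rw [← Function.iterate_add_apply]
      exact orbitY f hf (m + (BP k + 2)))
    (fun m => by
      rw [← Function.iterate_add_apply]
      exact (gaussMap_iter_mem _ hx hxi (m + (BP k + 2))).1)
  intro i hi
  rw [← Function.iterate_add_apply, ← Function.iterate_add_apply]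
  have hik : i ≤ k := by omega
  have hpos : i + (BP k + 2) = BP k + 2 + i := by omega
  rw [hpos, digitY f hf (BP k + 2 + i)]
  rw [seqA_copy f k i hik, Dg_cast _ hx hxi (BP k + 2 + i)]

end Construction
section LiYorke

variable (f : ℕ → ℝ) (hf : ∀ j, f j ∈ Set.Ioo (0:ℝ) 1 ∧ Irrational (f j))
include hf

lemma liY (j : ℕ) :
    liminf (fun n : ℕ => |gaussMap^[n] (cfVal (seqA f)) - gaussMap^[n] (f j)|) atTop = 0 ∧
    0 < limsup (fun n : ℕ => |gaussMap^[n] (cfVal (seqA f)) - gaussMap^[n] (f j)|) atTop := by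
  set u : ℕ → ℝ := fun n => |gaussMap^[n] (cfVal (seqA f)) - gaussMap^[n] (f j)| with hu
  have hub : ∀ n, u n ≤ 2 := by
    intro n
    have h1 := orbitY f hf n
    have h2 := (gaussMap_iter_mem _ (hf j).1 (hf j).2 n).1
    rw [hu]
    simp only
    rw [abs_le]
    constructor <;> [linarith [h1.1, h1.2, h2.1, h2.2]; linarith [h1.1, h1.2, h2.1, h2.2]]
  have hlb : ∀ n, 0 ≤ u n := fun n => abs_nonneg _
  have hbdd_above : IsBoundedUnder (· ≤ ·) atTop u := ⟨2, by
    rw [Filter.eventually_map]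
    exact Filter.Eventually.of_forall hub⟩
  have hbdd_below : IsBoundedUnder (· ≥ ·) atTop u := ⟨0, by
    rw [Filter.eventually_map]
    exact Filter.Eventually.of_forall hlb⟩
  constructor
  · -- liminf = 0
    have hle : ∀ ε : ℝ, 0 < ε → liminf u atTop ≤ ε := by
      intro ε hε
      apply Filter.liminf_le_of_frequently_le _ hbdd_below
      rw [Filter.frequently_atTop]
      intro N
      obtain ⟨m, hm⟩ := exists_pow_lt_of_lt_one hε (by norm_num : (1/4:ℝ) < 1)
      set t := max N (2*m)
      set k := Nat.pair j t with hk
      have hkt : t ≤ k := Nat.right_le_pair j t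
      have hkN : N ≤ BP k + 2 := by
        have := le_BP k
        have : N ≤ t := le_max_left _ _
        omega
      refine ⟨BP k + 2, hkN, ?_⟩
      have hcls := cls f hf k
      rw [hk, Nat.unpair_pair] at hcls
      have hmk : m ≤ k/2 := by
        have h2m : 2*m ≤ t := le_max_right _ _
        omega
      calc u (BP (Nat.pair j t) + 2) ≤ (1/4:ℝ)^((Nat.pair j t)/2) := hcls
        _ ≤ (1/4:ℝ)^m := pow_le_pow_of_le_one (by norm_num) (by norm_num) hmk
        _ ≤ ε := hm.le
    have hge : 0 ≤ liminf u atTop := by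
      apply Filter.le_liminf_of_le (hbdd_above.isCoboundedUnder_ge)
      exact Filter.Eventually.of_forall hlb
    have : liminf u atTop ≤ 0 := by
      by_contra h
      push_neg at h
      have := hle (liminf u atTop / 2) (by linarith)
      linarith
    linarith
  · -- limsup > 0
    have hfreq : ∃ᶠ n in atTop, 1/6 ≤ u n := by
      rw [Filter.frequently_atTop]
      intro N
      set k := Nat.pair j N with hk
      have hkN : N ≤ BP k := by
        have := le_BP k
        have := Nat.right_le_pair j N
        omega
      refine ⟨BP k, hkN, ?_⟩
      have hsep := sep f hf k
      rw [hk, Nat.unpair_pair] at hsep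
      exact hsep
    have := Filter.le_limsup_of_frequently_le hfreq hbdd_above
    linarith

end LiYorke

lemma ico_irr_mem_Ioo (x : ℝ) (h : x ∈ Set.Ico (0:ℝ) 1) (hirr : Irrational x) :
    x ∈ Set.Ioo (0:ℝ) 1 := by
  refine ⟨?_, h.2⟩
  rcases lt_or_eq_of_le h.1 with h' | h'
  · exact h'
  · exact absurd ⟨(0:ℚ), by rw [← h']; simp⟩ hirr


/-- Every maximal scrambled set of the Gauss system is uncountable. -/
theorem stmt_7 (S : Set ℝ) (hS : GaussScrambled S)
    (hmax : ∀ S' : Set ℝ, GaussScrambled S' → S ⊆ S' → S' = S) :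
    ¬ S.Countable := by
  intro hcount
  set x0 : ℝ := cfVal (fun _ => 1) with hx0
  have h1x0 : ∀ i, 1 ≤ (fun _ : ℕ => 1) i := fun _ => le_rfl
  have hScnt : (insert x0 S).Countable := hcount.insert x0
  obtain ⟨f, hfrange⟩ := Set.Countable.exists_eq_range hScnt ⟨x0, Set.mem_insert _ _⟩
  have hf : ∀ j, f j ∈ Set.Ioo (0:ℝ) 1 ∧ Irrational (f j) := by
    intro j
    have : f j ∈ insert x0 S := by rw [hfrange]; exact Set.mem_range_self j
    rcases Set.mem_insert_iff.mp this with h | h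
    · rw [h, hx0]
      exact ⟨⟨cfVal_pos _ h1x0, cfVal_lt_one _ h1x0⟩, cfVal_irrational _ h1x0⟩
    · have := hS.1 h
      exact ⟨ico_irr_mem_Ioo _ this.1 this.2, this.2⟩
  set y : ℝ := cfVal (seqA f) with hy
  have hymem : y ∈ Set.Ioo (0:ℝ) 1 := by
    have := orbitY f hf 0
    rwa [Function.iterate_zero, id] at this
  have hyirr : Irrational y := cfVal_irrational _ (seqA_pos f hf)
  have hyne : ∀ j, y ≠ f j := by
    intro j heq
    have hsep := sep f hf (Nat.pair j 0)
    rw [Nat.unpair_pair] at hsep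
    simp only at hsep
    rw [← heq, ← hy] at hsep
    simp at hsep
    linarith
  have hynotS : y ∉ S := by
    intro hyS
    have : y ∈ insert x0 S := Set.mem_insert_of_mem _ hyS
    rw [hfrange] at this
    obtain ⟨j, hj⟩ := this
    exact hyne j hj.symm
  have hS' : GaussScrambled (insert y S) := by
    constructor
    · intro z hz
      rcases Set.mem_insert_iff.mp hz with h | h
      · rw [h]
        exact ⟨⟨hymem.1.le, hymem.2⟩, hyirr⟩
      · exact hS.1 h
    · intro p hp q hq hne
      rcases Set.mem_insert_iff.mp hp with h1 | h1 <;>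
        rcases Set.mem_insert_iff.mp hq with h2 | h2
      · exact absurd (h1.trans h2.symm) hne
      · -- p = y, q ∈ S
        have : q ∈ insert x0 S := Set.mem_insert_of_mem _ h2
        rw [hfrange] at this
        obtain ⟨j, hj⟩ := this
        rw [h1, ← hj]
        exact liY f hf j
      · -- p ∈ S, q = y
        have : p ∈ insert x0 S := Set.mem_insert_of_mem _ h1
        rw [hfrange] at this
        obtain ⟨j, hj⟩ := this
        rw [h2, ← hj]
        have hkey := liY f hf j
        have hfun : (fun n : ℕ => |gaussMap^[n] (f j) - gaussMap^[n] (cfVal (seqA f))|)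
            = (fun n : ℕ => |gaussMap^[n] (cfVal (seqA f)) - gaussMap^[n] (f j)|) := by
          funext n
          exact abs_sub_comm _ _
        rw [hy, hfun]
        exact hkey
      · exact hS.2 p h1 q h2 hne
  have := hmax (insert y S) hS' (Set.subset_insert _ _)
  exact hynotS (this ▸ Set.mem_insert y S)
end

section
/- For continued fraction convergents, if q_n(a_1,…,a_n) denotes the denominator of the n-th convergent [a_1,…,a_n], then for all n ≥ 1 and 1 ≤ k ≤ n: (a_k + 1)/2 ≤ q_n(a_1,…,a_n) / q_{n−1}(a_1,…,a_{k−1}, a_{k+1},…,a_n) ≤ a_k + 1. -/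
/-- The continuant `K(a_1, …, a_n)`; one has `q_n(a_1,…,a_n) = K(a_1,…,a_n)`, the
denominator of the convergent `[a_1,…,a_n]`, satisfying `q_n = a_n q_{n-1} + q_{n-2}`. -/
def contDenom : List ℕ → ℕ
  | [] => 1
  | [a] => a
  | a :: b :: t => a * contDenom (b :: t) + contDenom t

def cdG : List ℕ → ℕ
  | [] => 0
  | l@(_ :: _) => contDenom l.dropLast

def cdT : List ℕ → ℕ
  | [] => 0
  | _ :: t => contDenom t

lemma cd_cons (a : ℕ) (v : List ℕ) : contDenom (a :: v) = a * contDenom v + cdT v := by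
  cases v <;> simp [contDenom, cdT]

lemma cdG_cons₂ (a b : ℕ) (t : List ℕ) :
    cdG (a :: b :: t) = a * cdG (b :: t) + cdG t := by
  cases t with
  | nil => simp [cdG, contDenom]
  | cons c t' => simp [cdG, contDenom, List.dropLast]

lemma cd_append (u : List ℕ) : ∀ v, contDenom (u ++ v) =
    contDenom u * contDenom v + cdG u * cdT v := by
  induction u using contDenom.induct with
  | case1 => intro v; simp [contDenom, cdG]
  | case2 a =>
    intro v
    rw [List.singleton_append, cd_cons]
    simp [contDenom, cdG]
  | case3 a b t ih1 ih2 =>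
    intro v
    have h1 : (a :: b :: t) ++ v = a :: b :: (t ++ v) := rfl
    have h2 : contDenom (a :: b :: (t ++ v)) =
        a * contDenom ((b :: t) ++ v) + contDenom (t ++ v) := rfl
    rw [h1, h2, ih1, ih2, cdG_cons₂,
      show contDenom (a :: b :: t) = a * contDenom (b :: t) + contDenom t from rfl]
    ring

lemma cd_ge_one (l : List ℕ) (h : ∀ x ∈ l, 1 ≤ x) : 1 ≤ contDenom l := by
  induction l using contDenom.induct with
  | case1 => simp [contDenom]
  | case2 a => simpa [contDenom] using h a (by simp)
  | case3 a b t ih1 ih2 =>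
    have ha := h a (by simp)
    have h1 := ih1 (fun x hx => h x (by simp [hx]))
    calc 1 = 1 * 1 + 0 := by ring
    _ ≤ a * contDenom (b :: t) + contDenom t := by
        exact Nat.add_le_add (Nat.mul_le_mul ha h1) (Nat.zero_le _)
    _ = contDenom (a :: b :: t) := rfl

lemma cdT_le (v : List ℕ) (h : ∀ x ∈ v, 1 ≤ x) : cdT v ≤ contDenom v := by
  cases v with
  | nil => simp [cdT, contDenom]
  | cons b t =>
    have hb := h b (by simp)
    rw [cd_cons]
    calc cdT (b :: t) = contDenom t := rfl
    _ ≤ b * contDenom t := Nat.le_mul_of_pos_left _ hb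
    _ ≤ b * contDenom t + cdT t := Nat.le_add_right _ _

lemma cdG_le (u : List ℕ) (h : ∀ x ∈ u, 1 ≤ x) : cdG u ≤ contDenom u := by
  cases u with
  | nil => simp [cdG, contDenom]
  | cons b t =>
    have hne : b :: t ≠ [] := by simp
    have hc : 1 ≤ (b :: t).getLast hne := h _ (List.getLast_mem hne)
    have key : contDenom (b :: t) =
        contDenom ((b :: t).dropLast ++ [(b :: t).getLast hne]) := by
      rw [List.dropLast_append_getLast]
    rw [key, cd_append]
    calc cdG (b :: t) = contDenom (b :: t).dropLast := rfl
    _ ≤ contDenom (b :: t).dropLast * contDenom [(b :: t).getLast hne] := by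
        exact Nat.le_mul_of_pos_right _ (by simp only [contDenom]; omega)
    _ ≤ _ := Nat.le_add_right _ _

/-- For continued fraction convergent denominators, deleting the `k`-th
partial quotient changes the denominator by a factor between `(a_k + 1)/2` and `a_k + 1`. -/
theorem stmt_11 (l : List ℕ) (hpos : ∀ x ∈ l, 1 ≤ x) (k : ℕ) (hk : k < l.length) :
    ((l.get ⟨k, hk⟩ : ℝ) + 1) / 2 ≤ (contDenom l : ℝ) / (contDenom (l.eraseIdx k) : ℝ) ∧
      (contDenom l : ℝ) / (contDenom (l.eraseIdx k) : ℝ) ≤ (l.get ⟨k, hk⟩ : ℝ) + 1 := by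
  set a := l.get ⟨k, hk⟩ with ha
  set u := l.take k with hu
  set v := l.drop (k + 1) with hv
  have hl : l = u ++ a :: v := by
    conv_lhs => rw [← List.take_append_drop k l, List.drop_eq_getElem_cons hk]
    rfl
  have he : l.eraseIdx k = u ++ v := List.eraseIdx_eq_take_drop_succ l k
  have hup : ∀ x ∈ u, 1 ≤ x := fun x hx => hpos x (List.take_subset _ _ hx)
  have hvp : ∀ x ∈ v, 1 ≤ x := fun x hx => hpos x (List.drop_subset _ _ hx)
  have hap : 1 ≤ a := hpos a (List.get_mem l ⟨k, hk⟩)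
  set P := contDenom u
  set Q := cdG u
  set R := contDenom v
  set S := cdT v
  have hDl : contDenom l = P * (a * R + S) + Q * R := by
    rw [hl, cd_append, cd_cons]; rfl
  have hDe : contDenom (l.eraseIdx k) = P * R + Q * S := by rw [he, cd_append]
  have hP : 1 ≤ P := cd_ge_one u hup
  have hR : 1 ≤ R := cd_ge_one v hvp
  have hQP : Q ≤ P := cdG_le u hup
  have hSR : S ≤ R := cdT_le v hvp
  -- real versions
  have hP' : (1 : ℝ) ≤ P := by exact_mod_cast hP
  have hR' : (1 : ℝ) ≤ R := by exact_mod_cast hR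
  have hQP' : (Q : ℝ) ≤ P := by exact_mod_cast hQP
  have hSR' : (S : ℝ) ≤ R := by exact_mod_cast hSR
  have ha' : (1 : ℝ) ≤ a := by exact_mod_cast hap
  have hQ0 : (0 : ℝ) ≤ Q := by positivity
  have hS0 : (0 : ℝ) ≤ S := by positivity
  have hDe0 : (0 : ℝ) < (contDenom (l.eraseIdx k) : ℝ) := by
    rw [hDe]; push_cast; nlinarith
  have hkey : (0 : ℝ) ≤ ((P : ℝ) - Q) * ((R : ℝ) - S) :=
    mul_nonneg (by linarith) (by linarith)
  constructor
  · rw [div_le_div_iff₀ (by norm_num) hDe0, hDl, hDe]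
    push_cast
    nlinarith [mul_nonneg hQ0 hS0, mul_nonneg (sub_nonneg.2 ha') (sub_nonneg.2 hSR'),
      mul_nonneg (mul_nonneg (sub_nonneg.2 ha') hQ0) (sub_nonneg.2 hSR'),
      mul_nonneg (mul_nonneg (sub_nonneg.2 ha') (sub_nonneg.2 hQP')) hS0,
      mul_nonneg (mul_nonneg (sub_nonneg.2 ha') (sub_nonneg.2 hQP')) (sub_nonneg.2 hSR')]
  · rw [div_le_iff₀ hDe0, hDl, hDe]
    push_cast
    nlinarith [mul_nonneg hQ0 hS0, mul_nonneg (mul_nonneg (sub_nonneg.2 ha') (by linarith : (0:ℝ) ≤ P)) (by linarith : (0:ℝ) ≤ R),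
      mul_nonneg (sub_nonneg.2 ha') (mul_nonneg hQ0 hS0)]
end
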